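/- Suppose the hyperedges of the complete 3-uniform hypergraph on n+1 ≥ 7 vertices are 3-colored red, blue, green such that the green hypergraph contains no Berge triangle. If u, v are vertices such that every hyperedge containing {u,v} except at most two is green (i.e., the pair {u,v} has list exactly {green} in the 2-multiplicity shadow graph), then for every other vertex v', the pair {u,v'} is contained in at most one green hyperedge. -/

import Mathlib

def BergeCycle (N n : ℕ) (E : Finset (Fin N) → Prop) : Prop :=
  ∃ v : ZMod n → Fin N, Function.Injective v ∧
    ∃ h : ZMod n → Finset (Fin N), Function.Injective h ∧
      ∀ i : ZMod n, E (h i) ∧ v i ∈ h i ∧ v (i + 1) ∈ h i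

lemma berge3 {N : ℕ} (E : Finset (Fin N) → Prop) {a b c : Fin N}
    (hab : a ≠ b) (hac : a ≠ c) (hbc : b ≠ c)
    {E1 E2 E3 : Finset (Fin N)} (h12 : E1 ≠ E2) (h13 : E1 ≠ E3) (h23 : E2 ≠ E3)
    (hE1 : E E1) (hE2 : E E2) (hE3 : E E3)
    (ha1 : a ∈ E1) (hb1 : b ∈ E1) (hb2 : b ∈ E2) (hc2 : c ∈ E2)
    (hc3 : c ∈ E3) (ha3 : a ∈ E3) : BergeCycle N 3 E := by
  have h10 : (1 : ZMod 3) ≠ 0 := by decide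
  have h20 : (2 : ZMod 3) ≠ 0 := by decide
  have h21 : (2 : ZMod 3) ≠ 1 := by decide
  have h30 : (3 : ZMod 3) = 0 := by decide
  have h110 : (1 : ZMod 3) + 1 ≠ 0 := by decide
  have h210 : (2 : ZMod 3) + 1 = 0 := by decide
  have key : ∀ i : ZMod 3, i = 0 ∨ i = 1 ∨ i = 2 := by decide
  refine ⟨fun i => if i = 0 then a else if i = 1 then b else c, ?_,
    fun i => if i = 0 then E1 else if i = 1 then E2 else E3, ?_, ?_⟩
  · intro i j hij
    rcases key i with rfl | rfl | rfl <;> rcases key j with rfl | rfl | rfl <;>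
      simp_all only [if_pos, if_neg, ite_true, ite_false, reduceIte] <;>
      first | rfl | (exfalso; simp_all [h10, h20, h21])
  · intro i j hij
    rcases key i with rfl | rfl | rfl <;> rcases key j with rfl | rfl | rfl <;>
      simp_all only [if_pos, if_neg, ite_true, ite_false, reduceIte] <;>
      first | rfl | (exfalso; simp_all [h10, h20, h21])
  · intro i
    rcases key i with rfl | rfl | rfl <;> simp_all [h10, h20, h21, h30, h110, h210]

lemma exists_avoid {n : ℕ} (hn : 6 ≤ n) (S : Finset (Fin (n+1))) (hS : S.card ≤ 6) :
    ∃ y : Fin (n+1), y ∉ S := by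
  by_contra h; push_neg at h
  have : (Finset.univ : Finset (Fin (n+1))).card ≤ S.card :=
    Finset.card_le_card (fun x _ => h x)
  simp [Finset.card_univ] at this; omega

lemma tri_decomp {N : ℕ} {e : Finset (Fin N)} (hc : e.card = 3) {a b : Fin N}
    (hab : a ≠ b) (ha : a ∈ e) (hb : b ∈ e) :
    ∃ w, w ≠ a ∧ w ≠ b ∧ e = {a, b, w} := by
  have hsub : ({a, b} : Finset (Fin N)) ⊆ e := by
    intro x hx; simp at hx; rcases hx with h | h <;> subst h <;> assumption
  have hp : ({a, b} : Finset (Fin N)).card = 2 := by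
    rw [Finset.card_insert_of_notMem (by simp [hab]), Finset.card_singleton]
  have h1 : (e \ {a, b}).card = 1 := by rw [Finset.card_sdiff_of_subset hsub, hc, hp]
  obtain ⟨w, hw⟩ := Finset.card_eq_one.mp h1
  have hwm : w ∈ e \ ({a, b} : Finset (Fin N)) := hw ▸ Finset.mem_singleton_self w
  simp only [Finset.mem_sdiff, Finset.mem_insert, Finset.mem_singleton] at hwm
  obtain ⟨hwe, hw2⟩ := hwm
  push_neg at hw2
  refine ⟨w, hw2.1, hw2.2, ?_⟩
  refine (Finset.eq_of_subset_of_card_le ?_ ?_).symm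
  · intro x hx; simp at hx; rcases hx with h | h | h <;> subst h <;> assumption
  · rw [hc]
    refine le_of_eq ?_
    rw [Finset.card_insert_of_notMem (by simp [hab, Ne.symm hw2.1]),
      Finset.card_insert_of_notMem (by simp [Ne.symm hw2.2]), Finset.card_singleton]

theorem stmt18 {n : ℕ} (hn : 6 ≤ n) (c : Finset (Fin (n + 1)) → Fin 3)
    (hfree : ¬ BergeCycle (n + 1) 3 (fun s => s.card = 3 ∧ c s = 2))
    (u v : Fin (n + 1)) (huv : u ≠ v)
    (hmost : (Finset.univ.filter (fun s : Finset (Fin (n + 1)) =>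
      s.card = 3 ∧ u ∈ s ∧ v ∈ s ∧ c s ≠ 2)).card ≤ 2) :
    ∀ v' : Fin (n + 1), v' ≠ u → v' ≠ v →
      (Finset.univ.filter (fun s : Finset (Fin (n + 1)) =>
        s.card = 3 ∧ u ∈ s ∧ v' ∈ s ∧ c s = 2)).card ≤ 1 := by
  intro v' hv'u hv'v
  by_contra hcard
  push_neg at hcard
  obtain ⟨e1, he1m, e2, he2m, he12⟩ := Finset.one_lt_card.mp hcard
  simp only [Finset.mem_filter, Finset.mem_univ, true_and] at he1m he2m
  obtain ⟨hc1, hu1, hv'1, hg1⟩ := he1m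
  obtain ⟨hc2, hu2, hv'2, hg2⟩ := he2m
  have huv' : u ≠ v' := Ne.symm hv'u
  obtain ⟨w1, hw1u, hw1v', he1eq⟩ := tri_decomp hc1 huv' hu1 hv'1
  obtain ⟨w2, hw2u, hw2v', he2eq⟩ := tri_decomp hc2 huv' hu2 hv'2
  have hw12 : w1 ≠ w2 := fun h => he12 (by rw [he1eq, he2eq, h])
  set B := Finset.univ.filter
    (fun x : Fin (n+1) => x ≠ u ∧ x ≠ v ∧ c {u, v, x} ≠ 2) with hBdef
  have hcard3 : ∀ x : Fin (n+1), x ≠ u → x ≠ v →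
      ({u, v, x} : Finset (Fin (n+1))).card = 3 := by
    intro x hxu hxv
    rw [Finset.card_insert_of_notMem (by simp [huv, Ne.symm hxu]),
        Finset.card_insert_of_notMem (by simp [Ne.symm hxv]), Finset.card_singleton]
  have hB2 : B.card ≤ 2 := by
    refine le_trans (Finset.card_le_card_of_injOn
      (fun x => ({u, v, x} : Finset (Fin (n+1)))) ?_ ?_) hmost
    · intro x hx
      simp only [hBdef, Finset.mem_coe, Finset.mem_filter, Finset.mem_univ, true_and] at hx
      simp only [Finset.mem_coe, Finset.mem_filter, Finset.mem_univ, true_and]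
      exact ⟨hcard3 x hx.1 hx.2.1, by simp, by simp, hx.2.2⟩
    · intro x hx y hy hxy
      simp only [hBdef, Finset.mem_coe, Finset.mem_filter, Finset.mem_univ,
        true_and] at hx hy
      have hxy' : ({u, v, x} : Finset (Fin (n+1))) = {u, v, y} := hxy
      have hmem : x ∈ ({u, v, y} : Finset (Fin (n+1))) := by
        rw [← hxy']; simp
      simp only [Finset.mem_insert, Finset.mem_singleton] at hmem
      rcases hmem with h | h | h
      exacts [absurd h hx.1, absurd h hx.2.1, h]
  have hgreen : ∀ x : Fin (n+1), x ≠ u → x ≠ v → x ∉ B → c {u, v, x} = 2 := by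
    intro x hxu hxv hxB
    by_contra h
    exact hxB (by simp [hBdef, hxu, hxv, h])
  by_cases hca : w1 ≠ v ∧ c {u, v, w1} = 2
  · -- triangle (w1, v', u) with edges e1, e2, {u,v,w1}
    obtain ⟨hw1v, hgf⟩ := hca
    have hv'f : v' ∉ ({u, v, w1} : Finset (Fin (n+1))) := by
      simp [hv'u, hv'v, Ne.symm hw1v']
    refine hfree (berge3 _ hw1v' hw1u (Ne.symm huv')
      he12 ?_ ?_ ⟨hc1, hg1⟩ ⟨hc2, hg2⟩ ⟨hcard3 w1 hw1u hw1v, hgf⟩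
      (by rw [he1eq]; simp) hv'1 hv'2 hu2 (by simp) (by simp))
    · intro h; rw [h] at hv'1; exact hv'f hv'1
    · intro h; rw [h] at hv'2; exact hv'f hv'2
  by_cases hcb : w2 ≠ v ∧ c {u, v, w2} = 2
  · -- triangle (w2, v', u) with edges e2, e1, {u,v,w2}
    obtain ⟨hw2v, hgf⟩ := hcb
    have hv'f : v' ∉ ({u, v, w2} : Finset (Fin (n+1))) := by
      simp [hv'u, hv'v, Ne.symm hw2v']
    refine hfree (berge3 _ hw2v' hw2u (Ne.symm huv')
      he12.symm ?_ ?_ ⟨hc2, hg2⟩ ⟨hc1, hg1⟩ ⟨hcard3 w2 hw2u hw2v, hgf⟩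
      (by rw [he2eq]; simp) hv'2 hv'1 hu1 (by simp) (by simp))
    · intro h; rw [h] at hv'2; exact hv'f hv'2
    · intro h; rw [h] at hv'1; exact hv'f hv'1
  push_neg at hca hcb
  by_cases hw1v : w1 = v
  · -- e1 = {u, v', v}; triangle (v', u, v) with edges e2, g={u,v,y}, e1
    have hw2v : w2 ≠ v := fun h => hw12 (hw1v.trans h.symm)
    have h4 : ({u, v, v', w2} : Finset (Fin (n+1))).card ≤ 4 := by
      have t1 := Finset.card_insert_le u ({v, v', w2} : Finset (Fin (n+1)))
      have t2 := Finset.card_insert_le v ({v', w2} : Finset (Fin (n+1)))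
      have t3 := Finset.card_insert_le v' ({w2} : Finset (Fin (n+1)))
      simp only [Finset.card_singleton] at t1 t2 t3
      omega
    have hS : (({u, v, v', w2} : Finset (Fin (n+1))) ∪ B).card ≤ 6 := by
      have := Finset.card_union_le ({u, v, v', w2} : Finset (Fin (n+1))) B
      omega
    obtain ⟨y, hy⟩ := exists_avoid hn _ hS
    simp only [Finset.mem_union, Finset.mem_insert, Finset.mem_singleton] at hy
    push_neg at hy
    obtain ⟨⟨hyu, hyv, hyv', hyw2⟩, hyB⟩ := hy
    have hgy : c {u, v, y} = 2 := hgreen y hyu hyv hyB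
    have hv'g : v' ∉ ({u, v, y} : Finset (Fin (n+1))) := by
      simp [hv'u, hv'v, Ne.symm hyv']
    refine hfree (berge3 _ hv'u hv'v huv ?_ he12.symm ?_
      ⟨hc2, hg2⟩ ⟨hcard3 y hyu hyv, hgy⟩ ⟨hc1, hg1⟩
      hv'2 hu2 (by simp) (by simp) (by rw [he1eq, hw1v]; simp) hv'1)
    · intro h; rw [← h] at hv'g; exact hv'g hv'2
    · intro h; rw [h] at hv'g; exact hv'g hv'1
  by_cases hw2v : w2 = v
  · -- e2 = {u, v', v}; triangle (v', u, v) with edges e1, g={u,v,y}, e2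
    have h4 : ({u, v, v', w1} : Finset (Fin (n+1))).card ≤ 4 := by
      have t1 := Finset.card_insert_le u ({v, v', w1} : Finset (Fin (n+1)))
      have t2 := Finset.card_insert_le v ({v', w1} : Finset (Fin (n+1)))
      have t3 := Finset.card_insert_le v' ({w1} : Finset (Fin (n+1)))
      simp only [Finset.card_singleton] at t1 t2 t3
      omega
    have hS : (({u, v, v', w1} : Finset (Fin (n+1))) ∪ B).card ≤ 6 := by
      have := Finset.card_union_le ({u, v, v', w1} : Finset (Fin (n+1))) B
      omega
    obtain ⟨y, hy⟩ := exists_avoid hn _ hS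
    simp only [Finset.mem_union, Finset.mem_insert, Finset.mem_singleton] at hy
    push_neg at hy
    obtain ⟨⟨hyu, hyv, hyv', hyw1⟩, hyB⟩ := hy
    have hgy : c {u, v, y} = 2 := hgreen y hyu hyv hyB
    have hv'g : v' ∉ ({u, v, y} : Finset (Fin (n+1))) := by
      simp [hv'u, hv'v, Ne.symm hyv']
    refine hfree (berge3 _ hv'u hv'v huv ?_ he12 ?_
      ⟨hc1, hg1⟩ ⟨hcard3 y hyu hyv, hgy⟩ ⟨hc2, hg2⟩
      hv'1 hu1 (by simp) (by simp) (by rw [he2eq, hw2v]; simp) hv'2)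
    · intro h; rw [← h] at hv'g; exact hv'g hv'1
    · intro h; rw [h] at hv'g; exact hv'g hv'2
  -- final case: w1 ≠ v, w2 ≠ v, both {u,v,w1}, {u,v,w2} non-green
  have hng1 := hca hw1v
  have hng2 := hcb hw2v
  have hw1B : w1 ∈ B := by simp [hBdef, hw1u, hw1v, hng1]
  have hw2B : w2 ∈ B := by simp [hBdef, hw2u, hw2v, hng2]
  have hBeq : ({w1, w2} : Finset (Fin (n+1))) = B := by
    refine Finset.eq_of_subset_of_card_le ?_ ?_
    · intro x hx; simp only [Finset.mem_insert, Finset.mem_singleton] at hx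
      rcases hx with h | h <;> subst h <;> assumption
    · rw [Finset.card_insert_of_notMem (by simp [hw12]), Finset.card_singleton]
      exact hB2
  have hv'B : v' ∉ B := by
    rw [← hBeq]
    simp [Ne.symm hw1v', Ne.symm hw2v']
  have hgf : c {u, v, v'} = 2 := hgreen v' hv'u hv'v hv'B
  have h5 : ({u, v, v', w1, w2} : Finset (Fin (n+1))).card ≤ 5 := by
    have t1 := Finset.card_insert_le u ({v, v', w1, w2} : Finset (Fin (n+1)))
    have t2 := Finset.card_insert_le v ({v', w1, w2} : Finset (Fin (n+1)))
    have t3 := Finset.card_insert_le v' ({w1, w2} : Finset (Fin (n+1)))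
    have t4 := Finset.card_insert_le w1 ({w2} : Finset (Fin (n+1)))
    simp only [Finset.card_singleton] at t1 t2 t3 t4
    omega
  obtain ⟨y, hy⟩ := exists_avoid hn _ (le_trans h5 (by omega))
  simp only [Finset.mem_insert, Finset.mem_singleton] at hy
  push_neg at hy
  obtain ⟨hyu, hyv, hyv', hyw1, hyw2⟩ := hy
  have hyB : y ∉ B := by rw [← hBeq]; simp [hyw1, hyw2]
  have hgy : c {u, v, y} = 2 := hgreen y hyu hyv hyB
  -- triangle (u, v', v) with edges e1 ⊇ {u,v'}, f={u,v,v'} ⊇ {v',v}, g={u,v,y} ⊇ {v,u}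
  have hvne1 : v ∉ e1 := by rw [he1eq]; simp [Ne.symm huv, Ne.symm hv'v, Ne.symm hw1v]
  have hv'g : v' ∉ ({u, v, y} : Finset (Fin (n+1))) := by
    simp [hv'u, hv'v, Ne.symm hyv']
  refine hfree (berge3 _ huv' huv hv'v ?_ ?_ ?_
    ⟨hc1, hg1⟩ ⟨hcard3 v' hv'u hv'v, hgf⟩ ⟨hcard3 y hyu hyv, hgy⟩
    hu1 hv'1 (by simp) (by simp) (by simp) (by simp))
  · intro h; rw [h] at hvne1; simp at hvne1
  · intro h; rw [h] at hvne1; simp at hvne1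
  · intro h; rw [← h] at hv'g; simp at hv'g
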